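/- arXiv:2409.20518 — 2 statements merged into one kernel-verified Lean document; each statement's English description precedes it below -/
import Mathlib

section
/- Let S ⊆ [ℕ]^∞ be a 𝔡-unbounded set. Then the subspace S ∪ Fin of the Cantor space 𝒫(ℕ) is Menger, but it is not σ-compact (it is not a countable union of compact subsets). -/
open Set Filter Cardinal

namespace OmissionOfIntervals

/-- The Cantor space `𝒫(ℕ)`, identified with `ℕ → Bool` via characteristic functions,
with the product topology. -/
abbrev CantorSp : Type := ℕ → Bool

/-- `Fin`: the points of the Cantor space coding finite subsets of `ℕ`. -/
def CFin : Set CantorSp := {x | {n | x n = true}.Finite}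

/-- `[ℕ]^∞`: the points of the Cantor space coding infinite subsets of `ℕ`. -/
def CInf : Set CantorSp := {x | {n | x n = true}.Infinite}

/-- Increasing enumeration of the subset of `ℕ` coded by `x`. -/
noncomputable def enum (x : CantorSp) : ℕ → ℕ := Nat.nth (fun n => x n = true)

/-- `f ≤* g`: `f n ≤ g n` for all but finitely many `n`. -/
def LeStar (f g : ℕ → ℕ) : Prop := ∀ᶠ n in atTop, f n ≤ g n

/-- `a ⊆* b`: the set coded by `a` is almost contained in the set coded by `b`. -/
def SubStar (a b : CantorSp) : Prop := {n | a n = true ∧ ¬ b n = true}.Finite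

/-- A dominating family in the Baire space. -/
def Dominating (S : Set (ℕ → ℕ)) : Prop := ∀ f : ℕ → ℕ, ∃ s ∈ S, LeStar f s

/-- An unbounded (with respect to `≤*`) family in the Baire space. -/
def UnboundedFam (S : Set (ℕ → ℕ)) : Prop := ¬ ∃ g : ℕ → ℕ, ∀ s ∈ S, LeStar s g

/-- The dominating number `𝔡`. -/
noncomputable def frd : Cardinal := sInf {c | ∃ S : Set (ℕ → ℕ), Dominating S ∧ #S = c}

/-- The bounding number `𝔟`. -/
noncomputable def frb : Cardinal := sInf {c | ∃ S : Set (ℕ → ℕ), UnboundedFam S ∧ #S = c}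

/-- A centered family of infinite subsets of `ℕ`: every finite subfamily has infinite
intersection. -/
def Centered (S : Set CantorSp) : Prop :=
  S ⊆ CInf ∧ ∀ F : Finset CantorSp, ↑F ⊆ S → {n | ∀ x ∈ F, x n = true}.Infinite

/-- `S` has a pseudointersection: an infinite set almost contained in every member of `S`. -/
def HasPseudointersection (S : Set CantorSp) : Prop := ∃ a ∈ CInf, ∀ s ∈ S, SubStar a s

/-- The pseudointersection number `𝔭`. -/
noncomputable def frp : Cardinal :=
  sInf {c | ∃ S : Set CantorSp, Centered S ∧ ¬ HasPseudointersection S ∧ #S = c}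

/-- `S ⊆ [ℕ]^∞` is `κ`-unbounded: `|S| ≥ κ` and for every `b : ℕ → ℕ` only `< κ` many
members of `S` satisfy `s(n) ≤ b(n)` for all `n` (via increasing enumerations). -/
def KappaUnbounded (κ : Cardinal) (S : Set CantorSp) : Prop :=
  κ ≤ #S ∧ ∀ b : ℕ → ℕ, #{s ∈ S | ∀ n, enum s n ≤ b n} < κ

/-- `X` is `κ`-concentrated on `CFin`: `|X| ≥ κ` and `|X ∖ U| < κ` for every open
`U ⊇ CFin`. -/
def KappaConcentrated (κ : Cardinal) (X : Set CantorSp) : Prop :=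
  κ ≤ #X ∧ ∀ U : Set CantorSp, IsOpen U → CFin ⊆ U → #(X \ U : Set CantorSp) < κ

/-- An open cover of the space `X`. -/
def IsOpenCover {X : Type*} [TopologicalSpace X] (𝒰 : Set (Set X)) : Prop :=
  (∀ U ∈ 𝒰, IsOpen U) ∧ ⋃₀ 𝒰 = Set.univ

/-- A point-cofinite (γ-) open cover of the space `X`: an infinite family of open sets such
that every point belongs to all but finitely many members. -/
def PointCofiniteCover {X : Type*} [TopologicalSpace X] (𝒰 : Set (Set X)) : Prop :=
  (∀ U ∈ 𝒰, IsOpen U) ∧ 𝒰.Infinite ∧ ∀ x : X, {U ∈ 𝒰 | x ∉ U}.Finite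

/-- An ω-cover of the space `X`: no member contains all of `X`, and every finite subset of
`X` is contained in some member. -/
def OmegaCover {X : Type*} [TopologicalSpace X] (𝒰 : Set (Set X)) : Prop :=
  (∀ U ∈ 𝒰, IsOpen U) ∧ (∀ U ∈ 𝒰, U ≠ Set.univ) ∧ ∀ F : Finset X, ∃ U ∈ 𝒰, ↑F ⊆ U

/-- An ω-cover of the subset `Y` by open subsets of the ambient space `X`. -/
def OmegaCoverOf {X : Type*} [TopologicalSpace X] (𝒰 : Set (Set X)) (Y : Set X) : Prop :=
  (∀ U ∈ 𝒰, IsOpen U) ∧ (∀ U ∈ 𝒰, ¬ Y ⊆ U) ∧ ∀ F : Finset X, ↑F ⊆ Y → ∃ U ∈ 𝒰, ↑F ⊆ U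

/-- The Menger property. -/
def Menger (X : Type*) [TopologicalSpace X] : Prop :=
  ∀ 𝒰 : ℕ → Set (Set X), (∀ n, IsOpenCover (𝒰 n)) →
    ∃ 𝓕 : ℕ → Set (Set X), (∀ n, 𝓕 n ⊆ 𝒰 n ∧ (𝓕 n).Finite) ∧ ⋃₀ (⋃ n, 𝓕 n) = Set.univ

/-- The Hurewicz property. -/
def Hurewicz (X : Type*) [TopologicalSpace X] : Prop :=
  ∀ 𝒰 : ℕ → Set (Set X), (∀ n, IsOpenCover (𝒰 n)) →
    (∀ n, ¬ ∃ 𝓕 ⊆ 𝒰 n, 𝓕.Finite ∧ ⋃₀ 𝓕 = Set.univ) →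
    ∃ 𝓕 : ℕ → Set (Set X), (∀ n, 𝓕 n ⊆ 𝒰 n ∧ (𝓕 n).Finite) ∧
      ∀ x : X, ∀ᶠ n in atTop, x ∈ ⋃₀ 𝓕 n

/-- The property `S1(Γ,Γ)`. -/
def S1GammaGamma (X : Type*) [TopologicalSpace X] : Prop :=
  ∀ 𝒰 : ℕ → Set (Set X), (∀ n, PointCofiniteCover (𝒰 n)) →
    ∃ U : ℕ → Set X, (∀ n, U n ∈ 𝒰 n) ∧ ∀ x : X, ∀ᶠ n in atTop, x ∈ U n

/-- The property `S1(Γ,O)`. -/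
def S1GammaO (X : Type*) [TopologicalSpace X] : Prop :=
  ∀ 𝒰 : ℕ → Set (Set X), (∀ n, PointCofiniteCover (𝒰 n)) →
    ∃ U : ℕ → Set X, (∀ n, U n ∈ 𝒰 n) ∧ (⋃ n, U n) = Set.univ

/-- The property `S1(Ω,Γ)`. -/
def S1OmegaGamma (X : Type*) [TopologicalSpace X] : Prop :=
  ∀ 𝒰 : ℕ → Set (Set X), (∀ n, OmegaCover (𝒰 n)) →
    ∃ U : ℕ → Set X, (∀ n, U n ∈ 𝒰 n) ∧ ∀ x : X, ∀ᶠ n in atTop, x ∈ U n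

/-- `X` is an ω-γ set: every open ω-cover has a subfamily that is a point-cofinite cover. -/
def OmegaGammaSet (X : Type*) [TopologicalSpace X] : Prop :=
  ∀ 𝒰 : Set (Set X), OmegaCover 𝒰 → ∃ 𝒱 ⊆ 𝒰, PointCofiniteCover 𝒱

/-- The property `U_k(Γ,Γ)`. -/
def UkGammaGamma (k : ℕ) (X : Type*) [TopologicalSpace X] : Prop :=
  ∀ 𝒰 : ℕ → Set (Set X), (∀ n, PointCofiniteCover (𝒰 n)) →
    (∀ n, ¬ ∃ 𝓕 : Finset (Set X), ↑𝓕 ⊆ 𝒰 n ∧ 𝓕.card ≤ k ∧ ⋃₀ (↑𝓕 : Set (Set X)) = Set.univ) →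
    ∃ 𝓕 : ℕ → Finset (Set X), (∀ n, ↑(𝓕 n) ⊆ 𝒰 n ∧ (𝓕 n).card ≤ k) ∧
      ∀ x : X, ∀ᶠ n in atTop, x ∈ ⋃₀ ((𝓕 n : Finset (Set X)) : Set (Set X))

/-- The property `U_id(Γ,Γ)`. -/
def UidGammaGamma (X : Type*) [TopologicalSpace X] : Prop :=
  ∀ 𝒰 : ℕ → Set (Set X), (∀ n, PointCofiniteCover (𝒰 n)) →
    (∀ n, ¬ ∃ 𝓕 : Finset (Set X), ↑𝓕 ⊆ 𝒰 n ∧ ⋃₀ (↑𝓕 : Set (Set X)) = Set.univ) →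
    ∃ 𝓕 : ℕ → Finset (Set X), (∀ n, ↑(𝓕 n) ⊆ 𝒰 n ∧ (𝓕 n).card ≤ n) ∧
      ∀ x : X, ∀ᶠ n in atTop, x ∈ ⋃₀ ((𝓕 n : Finset (Set X)) : Set (Set X))

/-- The set of terms of an ordinal-indexed sequence, below the ordinal `o`. -/
def rangeBelow (s : Ordinal → CantorSp) (o : Ordinal) : Set CantorSp := {x | ∃ α < o, x = s α}

/-- `s`, restricted to ordinals below `frb.ord`, is a `𝔟`-scale: an unbounded,
`≤*`-increasing `𝔟`-sequence of infinite subsets of `ℕ`. -/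
def IsBScale (s : Ordinal → CantorSp) : Prop :=
  (∀ α < frb.ord, s α ∈ CInf) ∧
  UnboundedFam {f | ∃ α < frb.ord, f = enum (s α)} ∧
  ∀ α β : Ordinal, α < β → β < frb.ord → LeStar (enum (s α)) (enum (s β))

/-- `t`, restricted to ordinals below `κ.ord`, is a `κ`-tower:
`⊆*`-decreasing sequence of infinite subsets of `ℕ`. -/
def IsTower (κ : Cardinal) (t : Ordinal → CantorSp) : Prop :=
  (∀ α < κ.ord, t α ∈ CInf) ∧
  ∀ α β : Ordinal, α < β → β < κ.ord → SubStar (t β) (t α)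

/-- An unbounded `κ`-tower. -/
def IsUnboundedTower (κ : Cardinal) (t : Ordinal → CantorSp) : Prop :=
  IsTower κ t ∧ UnboundedFam {f | ∃ α < κ.ord, f = enum (t α)}

/-- `a ⊑ b`: for all but finitely many `n`, the interval `[b(n), b(n+1)]` contains at least
two elements of the set coded by `a`. -/
def SqSubset (a b : CantorSp) : Prop :=
  ∀ᶠ n in atTop,
    2 ≤ ((Finset.Icc (enum b n) (enum b (n + 1))).filter (fun k => a k = true)).card

/-- `s`, restricted to ordinals below `frb.ord`, is a `𝔟(⊑)`-scale. -/
def IsBSqScale (s : Ordinal → CantorSp) : Prop :=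
  (∀ α < frb.ord, s α ∈ CInf) ∧
  UnboundedFam {f | ∃ α < frb.ord, f = enum (s α)} ∧
  ∀ α β : Ordinal, α < β → β < frb.ord → SqSubset (s α) (s β)

section Aux

lemma cfin_or_cinf (x : CantorSp) : x ∈ CFin ∨ x ∈ CInf :=
  (Set.finite_or_infinite _).imp id id

lemma not_cfin_of_cinf {x : CantorSp} (h : x ∈ CInf) : x ∉ CFin := fun hf => h hf

lemma countable_cfin : CFin.Countable := by
  rw [← Set.countable_coe_iff]
  have : ∀ x : ↥CFin, ∃ s : Finset ℕ, ∀ n, x.1 n = true ↔ n ∈ s := by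
    rintro ⟨x, hx⟩
    exact ⟨(show Set.Finite {n | x n = true} from hx).toFinset, fun n => by simp [Set.Finite.mem_toFinset]⟩
  choose f hf using this
  have hinj : Function.Injective f := by
    intro a b hab
    refine Subtype.ext (funext fun n => ?_)
    have h1 := hf a n; have h2 := hf b n; rw [hab] at h1
    cases ha : a.1 n <;> cases hb : b.1 n <;> simp_all
  exact Countable.of_equiv _ (Equiv.ofInjective f hinj).symm

lemma frd_le_of_dominating {F : Set (ℕ → ℕ)} (h : Dominating F) : frd ≤ #F :=
  csInf_le (OrderBot.bddBelow _) ⟨F, h, rfl⟩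

lemma not_dominating_of_lt {F : Set (ℕ → ℕ)} (h : #F < frd) :
    ∃ g : ℕ → ℕ, ∀ s ∈ F, ¬ LeStar g s := by
  by_contra hc
  push_neg at hc
  have : Dominating F := by
    intro f
    obtain ⟨s, hs, hls⟩ := hc f
    exact ⟨s, hs, hls⟩
  exact absurd (frd_le_of_dominating this) (not_le.mpr h)

lemma exists_dominating_card_frd : ∃ D : Set (ℕ → ℕ), Dominating D ∧ #D = frd := by
  have hne : {c | ∃ S : Set (ℕ → ℕ), Dominating S ∧ #S = c}.Nonempty :=
    ⟨#(Set.univ : Set (ℕ → ℕ)), Set.univ, fun f => ⟨f, trivial, Eventually.of_forall fun n => le_refl _⟩, rfl⟩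
  exact csInf_mem hne

lemma frd_le_mk_funs : frd ≤ #(ℕ → ℕ) := by
  have := frd_le_of_dominating (F := Set.univ)
    (fun f => ⟨f, trivial, Eventually.of_forall fun n => le_refl _⟩)
  simpa using this

lemma mk_funs_le_mk_cantor : #(ℕ → ℕ) ≤ #(ℕ → Bool) := by
  refine Cardinal.mk_le_of_injective (f := fun f m => decide ((Nat.unpair m).2 < f (Nat.unpair m).1)) ?_
  intro f g hfg
  funext n
  by_contra hne
  rcases Nat.lt_or_ge (f n) (g n) with hlt | hge
  · have := congrFun hfg (Nat.pair n (f n))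
    simp [Nat.unpair_pair, hlt] at this
  · have hlt : g n < f n := by omega
    have := congrFun hfg (Nat.pair n (g n))
    simp [Nat.unpair_pair, hlt] at this

lemma isOpen_cnt_gt (k m : ℕ) :
    IsOpen {x : CantorSp | k < Nat.count (fun n => x n = true) m} := by
  have hrw : {x : CantorSp | k < Nat.count (fun n => x n = true) m} =
      ⋃ s ∈ (Finset.range m).powerset.filter (fun s => k < s.card),
        ⋂ i ∈ (s : Finset ℕ), {x : CantorSp | x i = true} := by
    ext x
    simp only [Set.mem_setOf_eq, Set.mem_iUnion, Set.mem_iInter, Finset.mem_filter,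
      Finset.mem_powerset, exists_prop]
    constructor
    · intro hx
      refine ⟨(Finset.range m).filter (fun i => x i = true), ⟨Finset.filter_subset _ _, ?_⟩, ?_⟩
      · rwa [Nat.count_eq_card_filter_range] at hx
      · intro i hi
        exact (Finset.mem_filter.mp hi).2
    · rintro ⟨s, ⟨hsub, hcard⟩, hall⟩
      rw [Nat.count_eq_card_filter_range]
      refine lt_of_lt_of_le hcard (Finset.card_le_card ?_)
      intro i hi
      exact Finset.mem_filter.mpr ⟨hsub hi, hall i hi⟩
  rw [hrw]
  refine isOpen_biUnion fun s _ => isOpen_biInter_finset fun i _ => ?_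
  have hpre : {x : CantorSp | x i = true} = (fun x : CantorSp => x i) ⁻¹' {true} := rfl
  rw [hpre]
  exact (isOpen_discrete _).preimage (continuous_apply i)

lemma cinf_exists_cnt {x : CantorSp} (hx : x ∈ CInf) (k : ℕ) :
    ∃ m, k < Nat.count (fun n => x n = true) m := by
  refine ⟨Nat.nth (fun n => x n = true) k + 1, ?_⟩
  rw [Nat.count_nth_succ_of_infinite hx]
  omega

lemma bound_of_compact {C : Set CantorSp} (hC : IsCompact C) (hCI : C ⊆ CInf) :
    ∃ b : ℕ → ℕ, ∀ x ∈ C, ∀ k, enum x k ≤ b k := by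
  have hbk : ∀ k, ∃ m, ∀ x ∈ C, enum x k < m := by
    intro k
    have hcov : C ⊆ ⋃ m : ℕ, {x : CantorSp | k < Nat.count (fun n => x n = true) m} := by
      intro x hx
      obtain ⟨m, hm⟩ := cinf_exists_cnt (hCI hx) k
      exact Set.mem_iUnion.mpr ⟨m, hm⟩
    obtain ⟨t, ht⟩ := hC.elim_finite_subcover _ (fun m => isOpen_cnt_gt k m) hcov
    refine ⟨(t.sup id) + 1, fun x hx => ?_⟩
    have hx2 := ht hx
    simp only [Set.mem_iUnion, exists_prop] at hx2
    obtain ⟨m, hmt, hxm⟩ := hx2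
    have hcnt : k < Nat.count (fun n => x n = true) m := hxm
    have := Nat.nth_lt_of_lt_count hcnt
    have hmle : m ≤ t.sup id := Finset.le_sup (f := id) hmt
    exact lt_of_lt_of_le this (by omega)
  choose b hb using hbk
  exact ⟨b, fun x hx k => le_of_lt (hb k x hx)⟩

/-- `x` extends the finite binary string `σ`. -/
def Ext (σ : List Bool) (x : CantorSp) : Prop :=
  ∀ i, i < σ.length → x i = σ.getD i false

/-- restriction of `x` to its first `n` coordinates, as a string. -/
def restr (x : CantorSp) (n : ℕ) : List Bool := List.ofFn (fun i : Fin n => x i)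

lemma restr_length (x : CantorSp) (n : ℕ) : (restr x n).length = n := by
  simp [restr]

lemma restr_getD (x : CantorSp) {n i : ℕ} (h : i < n) :
    (restr x n).getD i false = x i := by
  rw [List.getD_eq_getElem _ _ (by simpa [restr_length])]
  simp [restr]

lemma ext_restr (x : CantorSp) (n : ℕ) : Ext (restr x n) x := by
  intro i hi
  rw [restr_length] at hi
  rw [restr_getD x hi]

lemma ext_nil (x : CantorSp) : Ext [] x := by
  intro i hi
  simp at hi

/-- `σ` is "small" w.r.t. `K`: the extensions of `σ` in `K ∩ CInf` are covered by countably
many pointwise-bounded sets. -/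
def SmallK (K : Set CantorSp) (σ : List Bool) : Prop :=
  ∃ b : ℕ → ℕ → ℕ, ∀ x, x ∈ K → x ∈ CInf → Ext σ x → ∃ m, ∀ k, enum x k ≤ b m k

lemma exists_mem_of_not_small {K : Set CantorSp} {σ : List Bool} (h : ¬ SmallK K σ) :
    ∃ x, x ∈ K ∧ x ∈ CInf ∧ Ext σ x := by
  by_contra hc
  push_neg at hc
  exact h ⟨fun _ _ => 0, fun x hK hI hE => absurd hE (hc x hK hI)⟩

lemma master (K : Set CantorSp) : ∃ B : ℕ → ℕ → ℕ, ∀ x, x ∈ K → x ∈ CInf →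
    (∃ σ, SmallK K σ ∧ Ext σ x) → ∃ m, ∀ k, enum x k ≤ B m k := by
  obtain ⟨g, hg⟩ := exists_surjective_nat (List Bool)
  have hw : ∀ σ : List Bool, ∃ b : ℕ → ℕ → ℕ, SmallK K σ →
      ∀ x, x ∈ K → x ∈ CInf → Ext σ x → ∃ m, ∀ k, enum x k ≤ b m k := by
    intro σ
    by_cases h : SmallK K σ
    · obtain ⟨b, hb⟩ := h
      exact ⟨b, fun _ => hb⟩
    · exact ⟨fun _ _ => 0, fun hh => absurd hh h⟩
  choose w hwspec using hw
  refine ⟨fun m => w (g (Nat.unpair m).1) (Nat.unpair m).2, ?_⟩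
  rintro x hxK hxI ⟨σ, hσs, hσe⟩
  obtain ⟨i, rfl⟩ := hg σ
  obtain ⟨m, hm⟩ := hwspec (g i) hσs x hxK hxI hσe
  exact ⟨Nat.pair i m, by simpa [Nat.unpair_pair] using hm⟩

/-- specification of one successor in the splitting construction. -/
def StepSpec (K : Set CantorSp) (σ τ : List Bool) : Prop :=
  ¬ SmallK K τ ∧ σ.length < τ.length ∧
    (∀ i, i < σ.length → τ.getD i false = σ.getD i false) ∧
    ∃ p, σ.length ≤ p ∧ p < τ.length ∧ τ.getD p false = true

lemma step_lemma {K : Set CantorSp} {σ : List Bool} (h : ¬ SmallK K σ) :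
    ∃ τ₀ τ₁ : List Bool, StepSpec K σ τ₀ ∧ StepSpec K σ τ₁ ∧
      ∃ i, i < τ₀.length ∧ i < τ₁.length ∧ τ₀.getD i false ≠ τ₁.getD i false := by
  obtain ⟨B, hB⟩ := master K
  -- a branch all of whose restrictions are big
  have h0 : ∃ x, x ∈ K ∧ x ∈ CInf ∧ Ext σ x ∧
      ∀ n, σ.length ≤ n → ¬ SmallK K (restr x n) := by
    by_contra hc
    push_neg at hc
    refine h ⟨B, fun x hK hI hE => hB x hK hI ?_⟩
    obtain ⟨n, hn, hsm⟩ := hc x hK hI hE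
    exact ⟨restr x n, hsm, ext_restr x n⟩
  obtain ⟨x₀, hx₀K, hx₀I, hx₀E, hx₀big⟩ := h0
  have h1 : ∃ x, x ∈ K ∧ x ∈ CInf ∧ Ext σ x ∧ x ≠ x₀ ∧
      ∀ n, σ.length ≤ n → ¬ SmallK K (restr x n) := by
    by_contra hc
    push_neg at hc
    refine h ⟨fun m k => max (B m k) (enum x₀ k), fun x hK hI hE => ?_⟩
    by_cases hx : x = x₀
    · exact ⟨0, fun k => by rw [hx]; exact le_max_right _ _⟩
    · obtain ⟨n, hn, hsm⟩ := hc x hK hI hE hx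
      obtain ⟨m, hm⟩ := hB x hK hI ⟨restr x n, hsm, ext_restr x n⟩
      exact ⟨m, fun k => le_trans (hm k) (le_max_left _ _)⟩
  obtain ⟨x₁, hx₁K, hx₁I, hx₁E, hx₁ne, hx₁big⟩ := h1
  obtain ⟨j, hj⟩ : ∃ j, x₀ j ≠ x₁ j := by
    by_contra hc
    push_neg at hc
    exact hx₁ne (funext fun i => (hc i).symm)
  obtain ⟨p₀, hp₀mem, hp₀gt⟩ := hx₀I.exists_gt σ.length
  obtain ⟨p₁, hp₁mem, hp₁gt⟩ := hx₁I.exists_gt σ.length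
  set n := max (j + 1) (max (p₀ + 1) (p₁ + 1)) with hn
  have hσn : σ.length ≤ n := by
    have : σ.length < p₀ + 1 := by omega
    omega
  refine ⟨restr x₀ n, restr x₁ n, ⟨hx₀big n hσn, ?_, ?_, ⟨p₀, le_of_lt hp₀gt, ?_, ?_⟩⟩,
    ⟨hx₁big n hσn, ?_, ?_, ⟨p₁, le_of_lt hp₁gt, ?_, ?_⟩⟩, ⟨j, ?_, ?_, ?_⟩⟩
  · rw [restr_length]; omega
  · intro i hi
    rw [restr_getD x₀ (by omega)]
    exact hx₀E i hi
  · rw [restr_length]; omega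
  · rw [restr_getD x₀ (by omega)]; exact hp₀mem
  · rw [restr_length]; omega
  · intro i hi
    rw [restr_getD x₁ (by omega)]
    exact hx₁E i hi
  · rw [restr_length]; omega
  · rw [restr_getD x₁ (by omega)]; exact hp₁mem
  · rw [restr_length]; omega
  · rw [restr_length]; omega
  · rw [restr_getD x₀ (by omega), restr_getD x₁ (by omega)]
    exact hj



/-- Iterated splitting along a branch `y`. -/
noncomputable def buildF (st : List Bool → List Bool × List Bool) (y : ℕ → Bool) :
    ℕ → List Bool
  | 0 => []
  | (j + 1) => if y j = true then (st (buildF st y j)).2 else (st (buildF st y j)).1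

lemma perfect_of_not_small {K : Set CantorSp} (hKcl : IsClosed K) (hroot : ¬ SmallK K []) :
    ∃ b : ℕ → ℕ, ∃ e : (ℕ → Bool) → CantorSp, Function.Injective e ∧
      ∀ y, e y ∈ K ∧ e y ∈ CInf ∧ ∀ k, enum (e y) k ≤ b k := by
  classical
  have hstep : ∀ σ : List Bool, ∃ p : List Bool × List Bool, ¬ SmallK K σ →
      StepSpec K σ p.1 ∧ StepSpec K σ p.2 ∧
        ∃ i, i < p.1.length ∧ i < p.2.length ∧ p.1.getD i false ≠ p.2.getD i false := by
    intro σ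
    by_cases h : SmallK K σ
    · exact ⟨([], []), fun hc => absurd h hc⟩
    · obtain ⟨τ₀, τ₁, h₀, h₁, hd⟩ := step_lemma h
      exact ⟨(τ₀, τ₁), fun _ => ⟨h₀, h₁, hd⟩⟩
  choose st hst using hstep
  set F : (ℕ → Bool) → ℕ → List Bool := buildF st with hF
  -- bigness invariant
  have I1 : ∀ y j, ¬ SmallK K (F y j) := by
    intro y j
    induction j with
    | zero => exact hroot
    | succ j ih =>
      have hs := hst (F y j) ih
      show ¬ SmallK K (if y j = true then (st (F y j)).2 else (st (F y j)).1)
      cases hyj : y j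
      · simpa [hyj] using hs.1.1
      · simpa [hyj] using hs.2.1.1
  -- step facts available at every stage
  have hstF : ∀ y j, StepSpec K (F y j) (F y (j + 1)) := by
    intro y j
    have hs := hst (F y j) (I1 y j)
    show StepSpec K (F y j) (if y j = true then (st (F y j)).2 else (st (F y j)).1)
    cases hyj : y j
    · simpa [hyj] using hs.1
    · simpa [hyj] using hs.2.1
  -- lengths
  have Ilen : ∀ y j, j ≤ (F y j).length := by
    intro y j
    induction j with
    | zero => simp
    | succ j ih =>
      have := (hstF y j).2.1
      omega
  -- monotone prefix property
  have Imono : ∀ y j j', j ≤ j' → (F y j).length ≤ (F y j').length ∧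
      ∀ i, i < (F y j).length → (F y j').getD i false = (F y j).getD i false := by
    intro y j j' hj
    induction j' with
    | zero =>
      have : j = 0 := by omega
      subst this
      exact ⟨le_refl _, fun i _ => rfl⟩
    | succ j' ih =>
      rcases Nat.lt_or_ge j (j' + 1) with hlt | hge
      · have hj' : j ≤ j' := by omega
        obtain ⟨hl, hp⟩ := ih hj'
        have hs := hstF y j'
        refine ⟨le_trans hl (le_of_lt hs.2.1), fun i hi => ?_⟩
        rw [hs.2.2.1 i (lt_of_lt_of_le hi hl), hp i hi]
      · have : j = j' + 1 := by omega
        subst this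
        exact ⟨le_refl _, fun i _ => rfl⟩
  -- many trues
  have Itrue : ∀ y j, ∃ s : Finset ℕ, s.card = j ∧
      ∀ i ∈ s, i < (F y j).length ∧ (F y j).getD i false = true := by
    intro y j
    induction j with
    | zero => exact ⟨∅, by simp, by simp⟩
    | succ j ih =>
      obtain ⟨s, hcard, hs⟩ := ih
      obtain ⟨hbig, hlen, hpre, p, hple, hplt, hptrue⟩ := hstF y j
      refine ⟨insert p s, ?_, ?_⟩
      · rw [Finset.card_insert_of_notMem (fun hmem => by have := (hs p hmem).1; omega), hcard]
      · intro i hi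
        rcases Finset.mem_insert.mp hi with rfl | hi'
        · exact ⟨hplt, hptrue⟩
        · obtain ⟨h1, h2⟩ := hs i hi'
          exact ⟨by omega, by rw [hpre i h1]; exact h2⟩
  -- depends only on initial segment
  have Idep : ∀ j y y', (∀ i, i < j → y i = y' i) → F y j = F y' j := by
    intro j
    induction j with
    | zero => intro y y' _; rfl
    | succ j ih =>
      intro y y' hyy
      have h1 : F y j = F y' j := ih y y' (fun i hi => hyy i (by omega))
      show (if y j = true then (st (F y j)).2 else (st (F y j)).1) =
        (if y' j = true then (st (F y' j)).2 else (st (F y' j)).1)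
      rw [h1, hyy j (by omega)]
  -- the limit point
  set e : (ℕ → Bool) → CantorSp := fun y n => (F y (n + 1)).getD n false with he
  have Ixy : ∀ y j i, i < (F y j).length → e y i = (F y j).getD i false := by
    intro y j i hi
    rcases le_total j (i + 1) with hle | hle
    · exact ((Imono y j (i + 1) hle).2 i hi).symm ▸ rfl
    · have hi1 : i < (F y (i + 1)).length := lt_of_lt_of_le (by omega) (Ilen y (i + 1))
      exact ((Imono y (i + 1) j hle).2 i hi1).symm
  -- infinite
  have hinf : ∀ y, e y ∈ CInf := by
    intro y
    rw [CInf, Set.mem_setOf_eq]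
    by_contra hfin
    rw [Set.not_infinite] at hfin
    obtain ⟨s, hcard, hs⟩ := Itrue y (hfin.toFinset.card + 1)
    have hsub : s ⊆ hfin.toFinset := by
      intro i hi
      rw [Set.Finite.mem_toFinset]
      obtain ⟨h1, h2⟩ := hs i hi
      show e y i = true
      rw [Ixy y _ i h1]
      exact h2
    have := Finset.card_le_card hsub
    omega
  -- member of K
  have hmemK : ∀ y, e y ∈ K := by
    intro y
    choose z hzK hzI hzE using fun j => exists_mem_of_not_small (I1 y j)
    have hzKe : ∀ᶠ j in (atTop : Filter ℕ), z j ∈ K := Eventually.of_forall hzK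
    refine hKcl.mem_of_tendsto ?_ hzKe
    rw [tendsto_pi_nhds]
    intro n
    have hEE : (fun j => z j n) =ᶠ[(atTop : Filter ℕ)] (fun _ => e y n) := by
      rw [EventuallyEq, eventually_atTop]
      refine ⟨n + 1, fun j hj => ?_⟩
      have hn : n < (F y j).length := lt_of_lt_of_le (show n < j by omega) (Ilen y j)
      rw [(hzE j) n hn, ← Ixy y j n hn]
    exact Tendsto.congr' hEE.symm tendsto_const_nhds
  -- the bound
  set b : ℕ → ℕ := fun k => Finset.univ.sup
    (fun v : Fin (k + 1) → Bool =>
      (F (fun i => if h : i < k + 1 then v ⟨i, h⟩ else false) (k + 1)).length) with hb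
  have hbound : ∀ y k, enum (e y) k ≤ b k := by
    intro y k
    have hFb : (F y (k + 1)).length ≤ b k := by
      set vy : Fin (k + 1) → Bool := fun i' => y i' with hvy
      have heq : F y (k + 1) = F (fun i => if h : i < k + 1 then vy ⟨i, h⟩ else false) (k + 1) := by
        refine Idep (k + 1) _ _ (fun i hi => ?_)
        simp [hvy, hi]
      rw [heq, hb]
      exact Finset.le_sup (f := fun v : Fin (k + 1) → Bool =>
        (F (fun i => if h : i < k + 1 then v ⟨i, h⟩ else false) (k + 1)).length)
        (Finset.mem_univ vy)
    have hcnt : k < Nat.count (fun n => e y n = true) (F y (k + 1)).length := by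
      obtain ⟨s, hcard, hs⟩ := Itrue y (k + 1)
      rw [Nat.count_eq_card_filter_range]
      have hsub : s ⊆ (Finset.range (F y (k + 1)).length).filter (fun n => e y n = true) := by
        intro i hi
        obtain ⟨h1, h2⟩ := hs i hi
        refine Finset.mem_filter.mpr ⟨Finset.mem_range.mpr h1, ?_⟩
        show e y i = true
        rw [Ixy y _ i h1]; exact h2
      have := Finset.card_le_card hsub
      omega
    have := Nat.nth_lt_of_lt_count hcnt
    exact le_trans (le_of_lt this) hFb
  -- injectivity
  have hinj : Function.Injective e := by
    intro y y' hee
    by_contra hne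
    obtain ⟨j, hj, hmin⟩ : ∃ j, y j ≠ y' j ∧ ∀ i, i < j → y i = y' i := by
      have hex : ∃ j, y j ≠ y' j := by
        by_contra hc
        push_neg at hc
        exact hne (funext hc)
      exact ⟨Nat.find hex, Nat.find_spec hex, fun i hi => by
        have := Nat.find_min hex hi
        simpa using this⟩
    have hFeq : F y j = F y' j := Idep j y y' hmin
    obtain ⟨i, hi1, hi2, hid⟩ := (hst (F y j) (I1 y j)).2.2
    have hy1 : F y (j + 1) = if y j = true then (st (F y j)).2 else (st (F y j)).1 := rfl
    have hy2 : F y' (j + 1) = if y' j = true then (st (F y' j)).2 else (st (F y' j)).1 := rfl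
    rw [← hFeq] at hy2
    cases hyj : y j <;> cases hyj' : y' j
    · exact hj (by rw [hyj, hyj'])
    · have e1 : e y i = (st (F y j)).1.getD i false := by
        have : i < (F y (j+1)).length := by rw [hy1, hyj]; simpa using hi1
        rw [Ixy y (j + 1) i this, hy1, hyj]
        simp
      have e2 : e y' i = (st (F y j)).2.getD i false := by
        have : i < (F y' (j+1)).length := by rw [hy2, hyj']; simpa using hi2
        rw [Ixy y' (j + 1) i this, hy2, hyj']
        simp
      exact hid (by rw [← e1, ← e2, hee])
    · have e1 : e y i = (st (F y j)).2.getD i false := by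
        have : i < (F y (j+1)).length := by rw [hy1, hyj]; simpa using hi2
        rw [Ixy y (j + 1) i this, hy1, hyj]
        simp
      have e2 : e y' i = (st (F y j)).1.getD i false := by
        have : i < (F y' (j+1)).length := by rw [hy2, hyj']; simpa using hi1
        rw [Ixy y' (j + 1) i this, hy2, hyj']
        simp
      exact hid (by rw [← e1, ← e2, hee])
    · exact hj (by rw [hyj, hyj'])
  exact ⟨b, e, hinj, fun y => ⟨hmemK y, hinf y, hbound y⟩⟩

lemma menger_of_unbounded (S : Set CantorSp) (hunb : KappaUnbounded frd S) :
    Menger ↥(S ∪ CFin) := by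
  classical
  intro 𝒰 h𝒰
  rcases isEmpty_or_nonempty ↥(S ∪ CFin) with hemp | hne
  · refine ⟨fun _ => ∅, fun n => ⟨empty_subset _, finite_empty⟩, ?_⟩
    have huniv : (Set.univ : Set ↥(S ∪ CFin)) = ∅ := Set.univ_eq_empty_iff.mpr hemp
    rw [huniv]
    simp
  -- countable subcovers
  have hT : ∀ n, ∃ U : ℕ → Set ↥(S ∪ CFin), (∀ i, U i ∈ 𝒰 n) ∧ ∀ x, ∃ i, x ∈ U i := by
    intro n
    obtain ⟨T, hTc, hTsub, hTun⟩ :=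
      TopologicalSpace.isOpen_sUnion_countable (𝒰 n) (h𝒰 n).1
    have hTuniv : ⋃₀ T = Set.univ := by rw [hTun, (h𝒰 n).2]
    have hTne : T.Nonempty := by
      rcases Set.eq_empty_or_nonempty T with rfl | h
      · exfalso
        rw [Set.sUnion_empty] at hTuniv
        exact (Set.univ_nonempty).ne_empty hTuniv.symm
      · exact h
    obtain ⟨U, hU⟩ := hTc.exists_eq_range hTne
    refine ⟨U, fun i => hTsub (hU ▸ Set.mem_range_self i), fun x => ?_⟩
    have hx : x ∈ ⋃₀ T := hTuniv.symm ▸ Set.mem_univ x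
    obtain ⟨t, ht, hxt⟩ := hx
    rw [hU] at ht
    obtain ⟨i, rfl⟩ := ht
    exact ⟨i, hxt⟩
  choose U hUmem hUcov using hT
  -- enumerate CFin
  have hCFne : CFin.Nonempty := ⟨fun _ => false, by
    show {n | (false : Bool) = true}.Finite
    simp⟩
  obtain ⟨q, hq⟩ := countable_cfin.exists_eq_range hCFne
  have hqmem : ∀ k, q k ∈ S ∪ CFin := fun k => Or.inr (hq ▸ Set.mem_range_self k)
  -- even part: cover CFin
  have hidx : ∀ k, ∃ i, (⟨q k, hqmem k⟩ : ↥(S ∪ CFin)) ∈ U (2 * k) i :=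
    fun k => hUcov (2 * k) _
  choose idx hidxmem using hidx
  set O : ℕ → Set ↥(S ∪ CFin) := fun k => U (2 * k) (idx k) with hO
  have hOopen : ∀ k, IsOpen (O k) := fun k => (h𝒰 (2 * k)).1 _ (hUmem (2 * k) (idx k))
  have hW : ∀ k, ∃ W : Set CantorSp, IsOpen W ∧ Subtype.val ⁻¹' W = O k :=
    fun k => isOpen_induced_iff.mp (hOopen k)
  choose W hWopen hWeq using hW
  set U₀ : Set CantorSp := ⋃ k, W k with hU₀
  have hU₀open : IsOpen U₀ := isOpen_iUnion hWopen
  have hCFsub : CFin ⊆ U₀ := by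
    intro x hx
    rw [hq] at hx
    obtain ⟨k, rfl⟩ := hx
    have : (⟨q k, hqmem k⟩ : ↥(S ∪ CFin)) ∈ O k := hidxmem k
    rw [← hWeq k] at this
    exact Set.mem_iUnion.mpr ⟨k, this⟩
  -- the compact complement gives a bound
  have hcomp : IsCompact U₀ᶜ := hU₀open.isClosed_compl.isCompact
  have hsubI : U₀ᶜ ⊆ CInf := by
    intro x hx
    rcases cfin_or_cinf x with hf | hi
    · exact absurd (hCFsub hf) hx
    · exact hi
  obtain ⟨b, hb⟩ := bound_of_compact hcomp hsubI
  have hTb : #{s ∈ S | ∀ n, enum s n ≤ b n} < frd := hunb.2 b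
  -- the residual set is small
  set R : Set ↥(S ∪ CFin) := {x | (x : CantorSp) ∉ U₀} with hR
  have hRmem : ∀ x : ↥(S ∪ CFin), (x : CantorSp) ∉ U₀ →
      (x : CantorSp) ∈ {s ∈ S | ∀ n, enum s n ≤ b n} := by
    intro x hx
    rcases x.2 with hs | hf
    · exact ⟨hs, hb _ hx⟩
    · exact absurd (hCFsub hf) hx
  have hRle : #R ≤ #{s ∈ S | ∀ n, enum s n ≤ b n} := by
    refine Cardinal.mk_le_of_injective
      (f := fun p : ↥R => (⟨(p.1 : CantorSp), hRmem p.1 p.2⟩ :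
        ↥{s ∈ S | ∀ n, enum s n ≤ b n})) ?_
    intro a c hac
    have h0 : ((a : ↥(S ∪ CFin)) : CantorSp) = ((c : ↥(S ∪ CFin)) : CantorSp) := by
      simpa using congrArg Subtype.val hac
    exact Subtype.ext (Subtype.ext h0)
  -- selection from odd covers
  set fm : ↥(S ∪ CFin) → ℕ → ℕ := fun x k => Nat.find (hUcov (2 * k + 1) x) with hfm
  have hfmmem : ∀ x k, x ∈ U (2 * k + 1) (fm x k) := fun x k => Nat.find_spec (hUcov (2 * k + 1) x)
  have hFlt : #((fun x : ↥(S ∪ CFin) => fm x) '' R) < frd :=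
    lt_of_le_of_lt (le_trans Cardinal.mk_image_le hRle) hTb
  obtain ⟨g, hg⟩ := not_dominating_of_lt hFlt
  have hRg : ∀ x : ↥(S ∪ CFin), (x : CantorSp) ∉ U₀ → ∃ k, fm x k < g k := by
    intro x hx
    have := hg (fm x) ⟨x, hx, rfl⟩
    rw [LeStar, Filter.not_eventually] at this
    obtain ⟨k, hk⟩ := this.exists
    exact ⟨k, not_le.mp hk⟩
  -- assemble the finite selections
  refine ⟨fun n => if n % 2 = 0 then {O (n / 2)} else U n '' {i | i ≤ g (n / 2)}, ?_, ?_⟩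
  · intro n
    by_cases hn : n % 2 = 0
    · have h2 : 2 * (n / 2) = n := by omega
      simp only [if_pos hn]
      constructor
      · intro V hV
        rw [Set.mem_singleton_iff.mp hV]
        show U (2 * (n / 2)) (idx (n / 2)) ∈ 𝒰 n
        rw [h2]
        exact hUmem n (idx (n / 2))
      · exact Set.finite_singleton _
    · simp only [if_neg hn]
      constructor
      · rintro V ⟨i, _, rfl⟩
        exact hUmem n i
      · exact (Set.finite_Iic (g (n / 2))).image _
  · rw [Set.eq_univ_iff_forall]
    intro x
    by_cases hx : (x : CantorSp) ∈ U₀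
    · obtain ⟨k, hk⟩ := Set.mem_iUnion.mp hx
      have hxO : x ∈ O k := by rw [← hWeq k]; exact hk
      refine Set.mem_sUnion.mpr ⟨O k, Set.mem_iUnion.mpr ⟨2 * k, ?_⟩, hxO⟩
      have hmod : (2 * k) % 2 = 0 := by omega
      have hdiv : (2 * k) / 2 = k := by omega
      simp only [if_pos hmod, hdiv]
      rfl
    · obtain ⟨k, hk⟩ := hRg x hx
      refine Set.mem_sUnion.mpr ⟨U (2 * k + 1) (fm x k), Set.mem_iUnion.mpr ⟨2 * k + 1, ?_⟩,
        hfmmem x k⟩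
      have hmod : (2 * k + 1) % 2 ≠ 0 := by omega
      have hdiv : (2 * k + 1) / 2 = k := by omega
      simp only [if_neg hmod, hdiv]
      exact ⟨fm x k, le_of_lt hk, rfl⟩

lemma not_sigmaCompact (S : Set CantorSp) (hS : S ⊆ CInf) (hunb : KappaUnbounded frd S) :
    ¬ SigmaCompactSpace ↥(S ∪ CFin) := by
  classical
  intro hsc
  set K : ℕ → Set CantorSp := fun n => Subtype.val '' compactCovering ↥(S ∪ CFin) n with hK
  have hKc : ∀ n, IsCompact (K n) :=
    fun n => (isCompact_compactCovering _ n).image continuous_subtype_val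
  have hKsub : ∀ n, K n ⊆ S ∪ CFin := by
    rintro n x ⟨y, _, rfl⟩
    exact y.2
  have hcover : ∀ x, x ∈ S ∪ CFin → ∃ n, x ∈ K n := by
    intro x hx
    have : (⟨x, hx⟩ : ↥(S ∪ CFin)) ∈ ⋃ n, compactCovering ↥(S ∪ CFin) n := by
      rw [iUnion_compactCovering]
      trivial
    obtain ⟨n, hn⟩ := Set.mem_iUnion.mp this
    exact ⟨n, ⟨⟨x, hx⟩, hn, rfl⟩⟩
  by_cases hall : ∀ n, SmallK (K n) []
  · -- every piece is countably bounded-covered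
    choose Bf hBf using hall
    set T : ℕ → Set CantorSp := fun j =>
      {s ∈ S | ∀ k, enum s k ≤ Bf (Nat.unpair j).1 (Nat.unpair j).2 k} with hT
    have hTlt : ∀ j, #(T j) < frd := fun j => hunb.2 _
    have hScov : ∀ s, s ∈ S → ∃ j, s ∈ T j := by
      intro s hs
      obtain ⟨n, hn⟩ := hcover s (Or.inl hs)
      obtain ⟨m, hm⟩ := hBf n s hn (hS hs) (ext_nil s)
      refine ⟨Nat.pair n m, hs, ?_⟩
      simpa [Nat.unpair_pair] using hm
    obtain ⟨D, hD, hDcard⟩ := exists_dominating_card_frd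
    have hDle : #D ≤ #S := by rw [hDcard]; exact hunb.1
    obtain ⟨φ⟩ := Cardinal.le_def _ _ |>.mp hDle
    set jd : ↥D → ℕ := fun d => Nat.find (hScov ↑(φ d) (φ d).2) with hjd
    have hjdmem : ∀ d, ↑(φ d) ∈ T (jd d) := fun d => Nat.find_spec (hScov ↑(φ d) (φ d).2)
    set Dsub : ℕ → Set (ℕ → ℕ) := fun j => (fun d : ↥D => (d : ℕ → ℕ)) '' {d | jd d = j}
      with hDsub
    have hDsublt : ∀ j, #(Dsub j) < frd := by
      intro j
      refine lt_of_le_of_lt (le_trans Cardinal.mk_image_le ?_) (hTlt j)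
      refine Cardinal.mk_le_of_injective (f := fun p : ↥{d : ↥D | jd d = j} =>
        (⟨↑(φ ↑p), by have := hjdmem ↑p; rwa [p.2] at this⟩ : ↥(T j))) ?_
      intro a c hac
      have h1 : (↑(φ ↑a) : CantorSp) = ↑(φ ↑c) := by
        simpa using congrArg Subtype.val hac
      have h2 : (↑a : ↥D) = ↑c := φ.injective (Subtype.ext h1)
      exact Subtype.ext h2
    have hfj : ∀ j, ∃ fj : ℕ → ℕ, ∀ s ∈ Dsub j, ¬ LeStar fj s :=
      fun j => not_dominating_of_lt (hDsublt j)
    choose fj hfjspec using hfj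
    set g : ℕ → ℕ := fun k => (Finset.range (k + 1)).sup (fun j => fj j k) with hg
    obtain ⟨d₀, hd₀D, hd₀⟩ := hD g
    set dd : ↥D := ⟨d₀, hd₀D⟩ with hdd
    have hmem : d₀ ∈ Dsub (jd dd) := ⟨dd, rfl, rfl⟩
    refine hfjspec (jd dd) d₀ hmem ?_
    have h1 : ∀ᶠ k in atTop, jd dd ≤ k := eventually_ge_atTop (jd dd)
    filter_upwards [hd₀, h1] with k hk1 hk2
    have hle : fj (jd dd) k ≤ (Finset.range (k + 1)).sup (fun j => fj j k) :=
      Finset.le_sup (f := fun j => fj j k) (Finset.mem_range.mpr (by omega))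
    exact le_trans hle hk1
  · -- some piece contains a perfect bounded set
    push_neg at hall
    obtain ⟨n, hn⟩ := hall
    obtain ⟨b, e, hinj, hspec⟩ := perfect_of_not_small (hKc n).isClosed hn
    have hmem : ∀ y, e y ∈ {s ∈ S | ∀ k, enum s k ≤ b k} := by
      intro y
      obtain ⟨hK, hI, hbd⟩ := hspec y
      rcases hKsub n hK with hs | hf
      · exact ⟨hs, hbd⟩
      · exact absurd hf (fun hfin => hI hfin)
    have hcle : #(ℕ → Bool) ≤ #{s ∈ S | ∀ k, enum s k ≤ b k} :=
      Cardinal.mk_le_of_injective (f := fun y => (⟨e y, hmem y⟩ : ↥{s ∈ S | ∀ k, enum s k ≤ b k}))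
        (fun a c hac => hinj (congrArg Subtype.val hac))
    have : frd < frd :=
      lt_of_le_of_lt (le_trans frd_le_mk_funs (le_trans mk_funs_le_mk_cantor hcle)) (hunb.2 b)
    exact absurd this (lt_irrefl _)

end Aux

/-- For a `𝔡`-unbounded set `S ⊆ [ℕ]^∞`, the subspace `S ∪ Fin` of the Cantor
space is Menger but not σ-compact. -/
theorem stmt0 (S : Set CantorSp) (hS : S ⊆ CInf) (hunb : KappaUnbounded frd S) :
    Menger ↥(S ∪ CFin) ∧ ¬ SigmaCompactSpace ↥(S ∪ CFin) := by
  exact ⟨menger_of_unbounded S hunb, not_sigmaCompact S hS hunb⟩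
end OmissionOfIntervals
end

section
/- For each unbounded 𝔟-tower T ⊆ [ℕ]^∞, the subspace T ∪ Fin of the Cantor space 𝒫(ℕ) satisfies S1(Γ,Γ). -/
open Set Filter Cardinal

namespace OmissionOfIntervals

lemma cylinder_mem {O : Set CantorSp} (hO : IsOpen O) {x : CantorSp} (hx : x ∈ O) :
    ∃ L : ℕ, ∀ y : CantorSp, (∀ i, i < L → y i = x i) → y ∈ O := by
  obtain ⟨I, u, hu, hsub⟩ := isOpen_pi_iff.mp hO x hx
  refine ⟨(I.sup id) + 1, fun y hy => hsub (Set.mem_pi.mpr fun i hi => ?_)⟩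
  rw [hy i (Nat.lt_succ_of_le (Finset.le_sup (f := id) hi))]
  exact (hu i hi).2

lemma omission {O : Set CantorSp} (hO : IsOpen O) (k : ℕ)
    (hC : ∀ x : CantorSp, (∀ i, k ≤ i → x i = false) → x ∈ O) :
    ∃ L : ℕ, k ≤ L ∧ ∀ y : CantorSp, (∀ i, k ≤ i → i < L → y i = false) → y ∈ O := by
  have key : ∀ v : Fin k → Bool, ∃ L : ℕ, ∀ y : CantorSp,
      (∀ i (h : i < k), y i = v ⟨i, h⟩) → (∀ i, k ≤ i → i < L → y i = false) → y ∈ O := by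
    intro v
    set x : CantorSp := fun i => if h : i < k then v ⟨i, h⟩ else false with hxdef
    have hx : x ∈ O := hC x (fun i hi => by simp [hxdef, Nat.not_lt.mpr hi])
    obtain ⟨L, hL⟩ := cylinder_mem hO hx
    refine ⟨L, fun y hy1 hy2 => hL y ?_⟩
    intro i hiL
    by_cases h : i < k
    · simp [hxdef, h, hy1 i h]
    · have hk : k ≤ i := Nat.not_lt.mp h
      simp [hxdef, h, hy2 i hk hiL]
  choose Lv hLv using key
  refine ⟨max k (Finset.univ.sup Lv), le_max_left _ _, fun y hy => ?_⟩
  refine hLv (fun j => y j.1) y (fun i h => rfl) (fun i h1 h2 => hy i h1 ?_)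
  exact lt_of_lt_of_le h2 (le_trans (Finset.le_sup (Finset.mem_univ _)) (le_max_right _ _))

lemma nth_bound (p : ℕ → Prop) [DecidablePred p] (m : ℕ → ℕ) (_hm : StrictMono m)
    (i0 : ℕ) (hmeet : ∀ i, i0 ≤ i → ∃ j, p j ∧ m i ≤ j ∧ j < m (i + 1)) :
    ∀ n, Nat.nth p n < m (n + i0 + 1) := by
  have hcount : ∀ c : ℕ, c + 1 ≤ Nat.count p (m (i0 + c + 1)) := by
    intro c
    induction c with
    | zero =>
      simp only [Nat.add_zero]
      obtain ⟨j, hpj, hj1, hj2⟩ := hmeet i0 le_rfl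
      have h1 : Nat.count p j + 1 ≤ Nat.count p (j + 1) := by
        rw [Nat.count_succ, if_pos hpj]
      have h2 : Nat.count p (j + 1) ≤ Nat.count p (m (i0 + 1)) :=
        Nat.count_monotone p hj2
      omega
    | succ c ih =>
      obtain ⟨j, hpj, hj1, hj2⟩ := hmeet (i0 + c + 1) (by omega)
      have h0 : Nat.count p (m (i0 + c + 1)) ≤ Nat.count p j := Nat.count_monotone p hj1
      have h1 : Nat.count p j + 1 ≤ Nat.count p (j + 1) := by
        rw [Nat.count_succ, if_pos hpj]
      have h2 : Nat.count p (j + 1) ≤ Nat.count p (m (i0 + c + 1 + 1)) :=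
        Nat.count_monotone p hj2
      have : i0 + (c + 1) + 1 = i0 + c + 1 + 1 := by omega
      rw [this]
      omega
  intro n
  exact Nat.nth_lt_of_lt_count (by have := hcount n; rw [show i0 + n + 1 = n + i0 + 1 by omega] at this; omega)


/-- diagonal bound -/
def Lstar (Lb : ℕ → ℕ → ℕ → ℕ) (k : ℕ) : ℕ :=
  max (k + 1) (((Finset.range (k + 1)) ×ˢ (Finset.range (k + 1))).sup fun p => Lb p.1 k p.2)

lemma lt_Lstar (Lb : ℕ → ℕ → ℕ → ℕ) (k : ℕ) : k < Lstar Lb k :=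
  lt_of_lt_of_le (Nat.lt_succ_self k) (le_max_left _ _)

lemma Lb_le_Lstar (Lb : ℕ → ℕ → ℕ → ℕ) {n j k : ℕ} (hn : n ≤ k) (hj : j ≤ k) :
    Lb n k j ≤ Lstar Lb k := by
  refine le_trans ?_ (le_max_right _ _)
  have hmem : ((n, j) : ℕ × ℕ) ∈ (Finset.range (k + 1)) ×ˢ (Finset.range (k + 1)) :=
    Finset.mem_product.mpr ⟨Finset.mem_range.mpr (Nat.lt_succ_of_le hn),
      Finset.mem_range.mpr (Nat.lt_succ_of_le hj)⟩
  exact Finset.le_sup (f := fun p : ℕ × ℕ => Lb p.1 k p.2) hmem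

/-- iterated diagonal bound -/
def mseq (Lb : ℕ → ℕ → ℕ → ℕ) : ℕ → ℕ
  | 0 => 0
  | i + 1 => Lstar Lb (mseq Lb i)

lemma mseq_strictMono (Lb : ℕ → ℕ → ℕ → ℕ) : StrictMono (mseq Lb) :=
  strictMono_nat_of_lt_succ fun i => lt_Lstar Lb (mseq Lb i)

lemma frb_le_of_unbounded {S : Set (ℕ → ℕ)} (hu : UnboundedFam S) : frb ≤ #↥S := by
  have hmem : #↥S ∈ {c | ∃ S : Set (ℕ → ℕ), UnboundedFam S ∧ #S = c} := ⟨S, hu, rfl⟩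
  exact csInf_le' hmem

lemma bounded_of_card_lt {S : Set (ℕ → ℕ)} (h : #S < frb) :
    ∃ g : ℕ → ℕ, ∀ f ∈ S, LeStar f g := by
  by_contra hc
  have hu : UnboundedFam S := hc
  exact absurd (frb_le_of_unbounded hu) (not_le.mpr h)

/-- For each unbounded `𝔟`-tower `T`, the subspace `T ∪ Fin` of the Cantor
space satisfies `S1(Γ,Γ)`. -/
theorem stmt3 (t : Ordinal → CantorSp) (ht : IsUnboundedTower frb t) :
    S1GammaGamma ↥(rangeBelow t frb.ord ∪ CFin) := by
  classical
  intro 𝒰 h𝒰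
  let X : Set CantorSp := rangeBelow t frb.ord ∪ CFin
  -- countable subfamilies
  have hinf : ∀ n, (𝒰 n).Infinite := fun n => (h𝒰 n).2.1
  let u : ∀ n, ℕ ↪ ↥(𝒰 n) := fun n => (hinf n).natEmbedding
  let V : ℕ → ℕ → Set ↥X := fun n m => ((u n m : ↥(𝒰 n)) : Set ↥X)
  have hVmem : ∀ n m, V n m ∈ 𝒰 n := fun n m => (u n m).2
  have hVopen : ∀ n m, IsOpen (V n m) := fun n m => (h𝒰 n).1 _ (hVmem n m)
  have hVinj : ∀ n, Function.Injective (fun m => V n m) := fun n =>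
    Function.Injective.comp Subtype.val_injective (u n).injective
  -- thresholds for single points
  have hfex : ∀ (z : ↥X) (n : ℕ), ∃ N, ∀ m, N ≤ m → z ∈ V n m := by
    intro z n
    have hfin : {m | z ∉ V n m}.Finite := by
      have hsub : {m | z ∉ V n m} ⊆ (fun m => V n m) ⁻¹' {U | U ∈ 𝒰 n ∧ z ∉ U} := by
        intro m hm
        exact ⟨hVmem n m, hm⟩
      exact Set.Finite.subset (Set.Finite.preimage
        (Set.injOn_of_injective (hVinj n)) ((h𝒰 n).2.2 z)) hsub
    obtain ⟨N, hN⟩ := hfin.bddAbove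
    refine ⟨N + 1, fun m hm => ?_⟩
    by_contra hmem
    exact absurd (hN hmem) (by omega)
  choose f hf using hfex
  -- ambient open sets
  have hOex : ∀ n m, ∃ O : Set CantorSp, IsOpen O ∧ Subtype.val ⁻¹' O = V n m := by
    intro n m
    exact isOpen_induced_iff.mp (hVopen n m)
  choose O hOopen hOpre using hOex
  have hmemO : ∀ n m (z : ↥X), (z : CantorSp) ∈ O n m ↔ z ∈ V n m := by
    intro n m z
    rw [← hOpre n m]
    exact Iff.rfl
  -- finite-support points are in X
  have hCX : ∀ k (x : CantorSp), (∀ i, k ≤ i → x i = false) → x ∈ X := by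
    intro k x hx
    refine Or.inr (Set.Finite.subset (Set.finite_Iio k) ?_)
    intro i hi
    simp only [Set.mem_setOf_eq] at hi
    simp only [Set.mem_Iio]
    by_contra hlt
    rw [hx i (Nat.not_lt.mp hlt)] at hi
    exact absurd hi (by simp)
  -- thresholds for the finite cubes
  have hthrex : ∀ n k, ∃ N, ∀ m, N ≤ m → ∀ x : CantorSp,
      (∀ i, k ≤ i → x i = false) → x ∈ O n m := by
    intro n k
    have hmk : ∀ v : Fin k → Bool,
        (fun i => if h : i < k then v ⟨i, h⟩ else false) ∈ X :=
      fun v => hCX k _ (fun i hi => by simp [Nat.not_lt.mpr hi])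
    refine ⟨Finset.univ.sup (fun v : Fin k → Bool => f ⟨_, hmk v⟩ n),
      fun m hm x hx => ?_⟩
    have hxX : x ∈ X := hCX k x hx
    set v : Fin k → Bool := fun j => x j.1 with hvdef
    have hxeq : (fun i => if h : i < k then v ⟨i, h⟩ else false) = x := by
      funext i
      by_cases h : i < k
      · simp [hvdef, h]
      · simp only [h, dif_neg, not_false_iff]
        exact (hx i (Nat.not_lt.mp h)).symm
    have hzeq : (⟨_, hmk v⟩ : ↥X) = ⟨x, hxX⟩ := Subtype.ext hxeq
    have h1 : f (⟨_, hmk v⟩ : ↥X) n ≤ m :=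
      le_trans (Finset.le_sup (f := fun v : Fin k → Bool => f ⟨_, hmk v⟩ n)
        (Finset.mem_univ v)) hm
    rw [hzeq] at h1
    exact (hmemO n m ⟨x, hxX⟩).mpr (hf _ n m h1)
  choose thr hthr using hthrex
  -- omission bounds
  have hLbex : ∀ n k j, ∃ L, k ≤ L ∧ ∀ y : CantorSp,
      (∀ i, k ≤ i → i < L → y i = false) → y ∈ O n (max j (thr n k)) := by
    intro n k j
    exact omission (hOopen n _) k (fun x hx => hthr n k _ (le_max_right _ _) x hx)
  choose Lb hLb1 hLb2 using hLbex
  -- find a tower element with infinitely many gaps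
  have hastar : ∃ α, α < frb.ord ∧
      {k | ∀ i, k ≤ i → i < Lstar Lb k → t α i = false}.Infinite := by
    by_contra hno
    push_neg at hno
    have hub : ¬ ∃ g : ℕ → ℕ, ∀ s ∈ {f | ∃ α < frb.ord, f = enum (t α)}, LeStar s g := ht.2
    refine hub ⟨fun n => mseq Lb (2 * n + 1), ?_⟩
    rintro s ⟨α, hα, rfl⟩
    have hfin : {k | ∀ i, k ≤ i → i < Lstar Lb k → t α i = false}.Finite :=
      hno α hα
    obtain ⟨K, hK⟩ := hfin.bddAbove
    have hmeet : ∀ i, K + 1 ≤ i → ∃ j, (t α j = true) ∧ mseq Lb i ≤ j ∧ j < mseq Lb (i + 1) := by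
      intro i hi
      have hge : K + 1 ≤ mseq Lb i := le_trans hi (StrictMono.le_apply (mseq_strictMono Lb))
      have hnm : mseq Lb i ∉ {k | ∀ i', k ≤ i' → i' < Lstar Lb k → t α i' = false} := by
        intro hmem
        exact absurd (hK hmem) (by omega)
      simp only [Set.mem_setOf_eq] at hnm
      push_neg at hnm
      obtain ⟨j, hj1, hj2, hj3⟩ := hnm
      refine ⟨j, ?_, hj1, hj2⟩
      revert hj3
      cases t α j <;> simp
    have hnth := nth_bound (fun i => t α i = true) (mseq Lb) (mseq_strictMono Lb) (K + 1) hmeet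
    show LeStar (enum (t α)) _
    rw [LeStar, eventually_atTop]
    refine ⟨K + 2, fun n hn => ?_⟩
    refine le_of_lt (lt_of_lt_of_le (hnth n) ((mseq_strictMono Lb).monotone (by omega)))
  obtain ⟨αs, hαs, hGinf⟩ := hastar
  -- the small family below αs is bounded
  have hXne : (fun _ => false) ∈ X := hCX 0 _ (fun i _ => rfl)
  let zt : Ordinal → ↥X := fun β =>
    if h : β < frb.ord then ⟨t β, Or.inl ⟨β, h, rfl⟩⟩ else ⟨fun _ => false, hXne⟩
  set S : Set (ℕ → ℕ) := (fun β => f (zt β)) '' (Set.Iio αs) with hSdef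
  have hScard : #↥S < frb := by
    have hsel : ∀ h : ↥S, ∃ β : ↥(Set.Iio αs), h.1 = f (zt β.1) := by
      rintro ⟨h, β, hβ, rfl⟩
      exact ⟨⟨β, hβ⟩, rfl⟩
    choose sel hsel using hsel
    have hembed : Nonempty (↥S ↪ ↥(Set.Iio αs)) := by
      refine ⟨⟨sel, fun a b hab => Subtype.ext ?_⟩⟩
      rw [hsel a, hsel b, hab]
    have h1 : Cardinal.lift.{1} #↥S ≤ Cardinal.lift.{0} #↥(Set.Iio αs) :=
      Cardinal.lift_mk_le'.mpr hembed
    rw [Ordinal.mk_Iio_ordinal, Cardinal.lift_lift] at h1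
    exact lt_of_le_of_lt (Cardinal.lift_le.mp h1) (Cardinal.lt_ord.mp hαs)
  obtain ⟨g0, hg0⟩ := bounded_of_card_lt hScard
  -- choose the gap positions
  have hkex : ∀ n, ∃ k, (∀ i, k ≤ i → i < Lstar Lb k → t αs i = false) ∧ n < k ∧ g0 n < k := by
    intro n
    obtain ⟨k, hkG, hk⟩ := hGinf.exists_gt (max n (g0 n))
    exact ⟨k, hkG, by omega, by omega⟩
  choose kk hkG hkn hkg using hkex
  -- the chosen members
  refine ⟨fun n => V n (max (g0 n) (thr n (kk n))), fun n => hVmem _ _, ?_⟩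
  have homiss : ∀ n (z : ↥X),
      (∀ i, kk n ≤ i → i < Lb n (kk n) (g0 n) → (z : CantorSp) i = false) →
      z ∈ V n (max (g0 n) (thr n (kk n))) := by
    intro n z hz
    exact (hmemO n _ z).mp (hLb2 n (kk n) (g0 n) (z : CantorSp) hz)
  have hLbLstar : ∀ n, Lb n (kk n) (g0 n) ≤ Lstar Lb (kk n) := by
    intro n
    exact Lb_le_Lstar Lb (le_of_lt (hkn n)) (le_of_lt (hkg n))
  rintro ⟨x, hx⟩
  rcases hx with ⟨β, hβ, rfl⟩ | hfin
  · rcases lt_or_ge β αs with hlt | hge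
    · -- small part : use g0
      have hzeq : (⟨t β, Or.inl ⟨β, hβ, rfl⟩⟩ : ↥X) = zt β := by
        refine Subtype.ext ?_
        show (t β : CantorSp) = ↑(if h : β < frb.ord then
          (⟨t β, Or.inl ⟨β, h, rfl⟩⟩ : ↥X) else ⟨fun _ => false, hXne⟩)
        rw [dif_pos hβ]
      have hmemS : f (zt β) ∈ S := ⟨β, hlt, rfl⟩
      have hls := hg0 _ hmemS
      rw [LeStar, eventually_atTop] at hls
      obtain ⟨N, hN⟩ := hls
      rw [eventually_atTop]
      refine ⟨N, fun n hn => ?_⟩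
      have hle : f (⟨t β, Or.inl ⟨β, hβ, rfl⟩⟩ : ↥X) n ≤ max (g0 n) (thr n (kk n)) := by
        rw [hzeq]
        exact le_trans (hN n hn) (le_max_left _ _)
      exact hf _ n _ hle
    · -- above αs : inherited gaps
      have hD : {i | t β i = true ∧ ¬ t αs i = true}.Finite := by
        rcases eq_or_lt_of_le hge with heq | hlt
        · have : {i | t β i = true ∧ ¬ t αs i = true} = ∅ := by
            ext i
            simp only [Set.mem_setOf_eq, Set.mem_empty_iff_false, iff_false, not_and, not_not]
            intro h
            rw [heq]
            exact h
          rw [this]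
          exact Set.finite_empty
        · exact ht.1.2 αs β hlt hβ
      obtain ⟨M, hM⟩ := hD.bddAbove
      rw [eventually_atTop]
      refine ⟨M + 1, fun n hn => ?_⟩
      refine homiss n _ (fun i hi1 hi2 => ?_)
      by_contra htrue
      have hxt : t β i = true := by
        cases hb : t β i
        · exact absurd hb htrue
        · rfl
      by_cases hα : t αs i = true
      · have : t αs i = false :=
          hkG n i hi1 (lt_of_lt_of_le hi2 (hLbLstar n))
        rw [hα] at this
        simp at this
      · have : i ≤ M := hM ⟨hxt, hα⟩
        have : n < i := lt_of_lt_of_le (hkn n) hi1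
        omega
  · -- finite sets
    obtain ⟨M, hM⟩ := hfin.bddAbove
    rw [eventually_atTop]
    refine ⟨M + 1, fun n hn => ?_⟩
    refine homiss n _ (fun i hi1 hi2 => ?_)
    by_contra htrue
    have hxt : x i = true := by
      cases hb : x i
      · exact absurd hb htrue
      · rfl
    have h1 : i ≤ M := hM hxt
    have h2 : n < i := lt_of_lt_of_le (hkn n) hi1
    omega
end OmissionOfIntervals
end
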